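/- If A = (a_ij) is an extreme point of U_1, then either A is a stochastic matrix, or there exists a subset α ⊆ {1,...,m} with |α| = m−1 such that ∑_{i∈α} ∑_{j∈α} a_ij = m−1. -/

import Mathlib

/-- Extreme point of a set: cannot be a midpoint of two distinct points of the set. -/
def IsExtremePt {X : Type*} [AddCommGroup X] [Module ℝ X] (C : Set X) (x : X) : Prop :=
  x ∈ C ∧ ∀ y ∈ C, ∀ z ∈ C, x = (1 / 2 : ℝ) • (y + z) → y = z

/-- The set `U_1` of symmetric nonnegative matrices with all principal-block sums
bounded by the block size and total sum `m`. -/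
def U1 (m : ℕ) : Set (Matrix (Fin m) (Fin m) ℝ) :=
  {A | A.IsSymm ∧ (∀ i j, 0 ≤ A i j) ∧
    (∀ α : Finset (Fin m), ∑ i ∈ α, ∑ j ∈ α, A i j ≤ (α.card : ℝ)) ∧
    (∑ i, ∑ j, A i j = (m : ℝ))}

/-- A (row-)stochastic matrix. -/
def IsStochastic (m : ℕ) (T : Matrix (Fin m) (Fin m) ℝ) : Prop :=
  (∀ i j, 0 ≤ T i j) ∧ ∀ i, ∑ j, T i j = 1

open Finset
variable {m : ℕ}

def bsum (A : Matrix (Fin m) (Fin m) ℝ) (σ : Finset (Fin m)) : ℝ := ∑ p ∈ σ ×ˢ σ, A p.1 p.2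

lemma bsum_eq (A : Matrix (Fin m) (Fin m) ℝ) (σ : Finset (Fin m)) :
    bsum A σ = ∑ i ∈ σ, ∑ j ∈ σ, A i j := by
  rw [bsum, Finset.sum_product]

lemma bsum_add (A B : Matrix (Fin m) (Fin m) ℝ) (σ : Finset (Fin m)) :
    bsum (A + B) σ = bsum A σ + bsum B σ := by
  simp [bsum, Finset.sum_add_distrib]

lemma bsum_smul (t : ℝ) (A : Matrix (Fin m) (Fin m) ℝ) (σ : Finset (Fin m)) :
    bsum (t • A) σ = t * bsum A σ := by
  simp [bsum, Finset.mul_sum]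

lemma bsum_sub (A B : Matrix (Fin m) (Fin m) ℝ) (σ : Finset (Fin m)) :
    bsum (A - B) σ = bsum A σ - bsum B σ := by
  simp [bsum, Finset.sum_sub_distrib]

lemma bsum_neg (A : Matrix (Fin m) (Fin m) ℝ) (σ : Finset (Fin m)) :
    bsum (-A) σ = - bsum A σ := by
  simp [bsum]

lemma bsum_nonneg {A : Matrix (Fin m) (Fin m) ℝ} (hA : ∀ i j, 0 ≤ A i j) (σ : Finset (Fin m)) :
    0 ≤ bsum A σ := Finset.sum_nonneg fun p _ => hA p.1 p.2

lemma bsum_mono {A : Matrix (Fin m) (Fin m) ℝ} (hA : ∀ i j, 0 ≤ A i j) {σ τ : Finset (Fin m)}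
    (h : σ ⊆ τ) : bsum A σ ≤ bsum A τ :=
  Finset.sum_le_sum_of_subset_of_nonneg (Finset.product_subset_product h h)
    (fun p _ _ => hA p.1 p.2)

lemma prod_inter (σ τ : Finset (Fin m)) : (σ ×ˢ σ) ∩ (τ ×ˢ τ) = (σ ∩ τ) ×ˢ (σ ∩ τ) := by
  ext p; simp [Finset.mem_product, Finset.mem_inter]; tauto

lemma bsum_union_inter {A : Matrix (Fin m) (Fin m) ℝ} (hA : ∀ i j, 0 ≤ A i j)
    (σ τ : Finset (Fin m)) :
    bsum A σ + bsum A τ ≤ bsum A (σ ∪ τ) + bsum A (σ ∩ τ) := by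
  have h1 : bsum A σ + bsum A τ
      = (∑ p ∈ (σ ×ˢ σ) ∪ (τ ×ˢ τ), A p.1 p.2) + ∑ p ∈ (σ ×ˢ σ) ∩ (τ ×ˢ τ), A p.1 p.2 := by
    rw [Finset.sum_union_inter]; rfl
  rw [h1, prod_inter]
  have h2 : (∑ p ∈ (σ ×ˢ σ) ∪ (τ ×ˢ τ), A p.1 p.2) ≤ bsum A (σ ∪ τ) := by
    apply Finset.sum_le_sum_of_subset_of_nonneg _ (fun p _ _ => hA p.1 p.2)
    apply Finset.union_subset <;>
      exact Finset.product_subset_product (by simp [Finset.subset_union_left, Finset.subset_union_right]) (by simp [Finset.subset_union_left, Finset.subset_union_right])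
  exact add_le_add h2 le_rfl

/-- If σ and τ are tight subsets of α (where all block constraints hold), then σ∪τ and σ∩τ
are tight. -/
lemma tight_union_inter {A : Matrix (Fin m) (Fin m) ℝ} (hA : ∀ i j, 0 ≤ A i j)
    {α σ τ : Finset (Fin m)} (hsub : ∀ δ ⊆ α, bsum A δ ≤ (δ.card : ℝ))
    (hσα : σ ⊆ α) (hτα : τ ⊆ α) (hσ : bsum A σ = (σ.card : ℝ)) (hτ : bsum A τ = (τ.card : ℝ)) :
    bsum A (σ ∪ τ) = ((σ ∪ τ).card : ℝ) ∧ bsum A (σ ∩ τ) = ((σ ∩ τ).card : ℝ) := by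
  have hu := hsub (σ ∪ τ) (Finset.union_subset hσα hτα)
  have hi := hsub (σ ∩ τ) ((Finset.inter_subset_left).trans hσα)
  have hkey := bsum_union_inter hA σ τ
  have hcard : ((σ ∪ τ).card : ℝ) + ((σ ∩ τ).card : ℝ) = (σ.card : ℝ) + (τ.card : ℝ) := by
    have := Finset.card_union_add_card_inter σ τ
    exact_mod_cast congrArg (Nat.cast : ℕ → ℝ) this
  constructor <;> nlinarith [hu, hi, hkey, hcard]

/-- Block sum of a matrix supported on γ×γ. -/
lemma bsum_support {C : Matrix (Fin m) (Fin m) ℝ} {γ : Finset (Fin m)}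
    (hC : ∀ i j, C i j ≠ 0 → i ∈ γ ∧ j ∈ γ) (τ : Finset (Fin m)) :
    bsum C τ = bsum C (τ ∩ γ) := by
  rw [bsum, bsum]
  refine (Finset.sum_subset (Finset.product_subset_product inter_subset_left inter_subset_left)
    ?_).symm
  intro p hp hnp
  by_contra hne
  obtain ⟨h1, h2⟩ := hC p.1 p.2 hne
  simp only [Finset.mem_product, Finset.mem_inter] at hp hnp
  exact hnp ⟨⟨hp.1, h1⟩, hp.2, h2⟩

def classMat (i j : Fin m) : Matrix (Fin m) (Fin m) ℝ :=
  fun a b => if (a = i ∧ b = j) ∨ (a = j ∧ b = i) then 1 else 0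

lemma classMat_symm (i j : Fin m) : (classMat i j).IsSymm := by
  ext a b
  simp only [Matrix.transpose_apply, classMat]
  congr 1
  simp only [eq_iff_iff]; tauto

lemma classMat_ne {i j a b : Fin m} (h : classMat i j a b ≠ 0) :
    (a = i ∧ b = j) ∨ (a = j ∧ b = i) := by
  by_contra hc; simp [classMat, hc] at h

lemma classMat_self (i j : Fin m) : classMat i j i j = 1 := by simp [classMat]

lemma bsum_classMat {i j : Fin m} {α : Finset (Fin m)} (hi : i ∈ α) (hj : j ∈ α) :
    bsum (classMat i j) α = if i = j then 1 else 2 := by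
  by_cases hij : i = j
  · subst hij
    have hfun : ∀ p : Fin m × Fin m, classMat i i p.1 p.2 = (if p = (i, i) then (1:ℝ) else 0) := by
      intro p
      by_cases h1 : p = (i, i) <;> simp_all [classMat, Prod.ext_iff] <;> tauto
    rw [bsum]
    simp_rw [hfun]
    rw [Finset.sum_ite_eq' (α ×ˢ α) (i,i)]
    simp [Finset.mem_product, hi]
  · have hfun : ∀ p : Fin m × Fin m, classMat i j p.1 p.2
        = (if p = (i, j) then (1:ℝ) else 0) + (if p = (j, i) then 1 else 0) := by
      rintro ⟨a, b⟩
      simp only [classMat, Prod.mk.injEq]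
      by_cases hai : a = i <;> by_cases hbj : b = j <;> by_cases haj : a = j <;>
        by_cases hbi : b = i <;> simp_all
    rw [bsum]
    simp_rw [hfun]
    rw [Finset.sum_add_distrib, Finset.sum_ite_eq' (α ×ˢ α) (i,j),
      Finset.sum_ite_eq' (α ×ˢ α) (j,i)]
    simp [hij, Finset.mem_product, hi, hj]
    norm_num

lemma bsum_classMat_zero {i j : Fin m} {τ : Finset (Fin m)} (h : ¬(i ∈ τ ∧ j ∈ τ)) :
    bsum (classMat i j) τ = 0 := by
  rw [bsum]
  apply Finset.sum_eq_zero
  intro p hp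
  simp only [Finset.mem_product] at hp
  by_contra hne
  rcases classMat_ne hne with ⟨h1, h2⟩ | ⟨h1, h2⟩
  · exact h ⟨h1 ▸ hp.1, h2 ▸ hp.2⟩
  · exact h ⟨h2 ▸ hp.2, h1 ▸ hp.1⟩

lemma combine (n : ℕ) (α : Finset (Fin m)) (A : Matrix (Fin m) (Fin m) ℝ)
    (IH : ∀ k, k < n → ∀ (α' : Finset (Fin m)) (A' : Matrix (Fin m) (Fin m) ℝ),
      α'.card = k → A'.IsSymm → (∀ i j, 0 ≤ A' i j) →
      (∀ τ ⊆ α', bsum A' τ ≤ (τ.card : ℝ)) → bsum A' α' = (α'.card : ℝ) →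
      (∀ C : Matrix (Fin m) (Fin m) ℝ, C.IsSymm →
        (∀ i j, C i j ≠ 0 → (i ∈ α' ∧ j ∈ α') ∧ 0 < A' i j) →
        (∀ τ ⊆ α', bsum A' τ = (τ.card : ℝ) → bsum C τ = 0) → C = 0) →
      (∀ i ∈ α', ∑ j ∈ α', A' i j = 1) ∨
        ∃ δ ⊆ α', δ.card = α'.card - 1 ∧ bsum A' δ = (α'.card : ℝ) - 1)
    (hcard : α.card = n) (hsymm : A.IsSymm) (hnn : ∀ i j, 0 ≤ A i j)
    (hsub : ∀ τ ⊆ α, bsum A τ ≤ (τ.card : ℝ)) (hα : bsum A α = (α.card : ℝ))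
    (hV : ∀ C : Matrix (Fin m) (Fin m) ℝ, C.IsSymm →
      (∀ i j, C i j ≠ 0 → (i ∈ α ∧ j ∈ α) ∧ 0 < A i j) →
      (∀ τ ⊆ α, bsum A τ = (τ.card : ℝ) → bsum C τ = 0) → C = 0)
    (hR : ¬ ∃ δ ⊆ α, δ.card = n - 1 ∧ bsum A δ = ((n : ℝ) - 1)) :
    ∀ N γ δ, γ ⊆ α → γ ≠ α → bsum A γ = (γ.card : ℝ) →
      δ ⊆ α → δ ≠ α → bsum A δ = (δ.card : ℝ) → γ ∪ δ = α →
      γ.card + δ.card ≤ N → ∀ i ∈ α, ∑ j ∈ α, A i j = 1 := by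
  -- helper : goodness transfer to a proper tight subset
  have hgood : ∀ γ : Finset (Fin m), γ ⊆ α → bsum A γ = (γ.card : ℝ) →
      (∀ C : Matrix (Fin m) (Fin m) ℝ, C.IsSymm →
        (∀ i j, C i j ≠ 0 → (i ∈ γ ∧ j ∈ γ) ∧ 0 < A i j) →
        (∀ τ ⊆ γ, bsum A τ = (τ.card : ℝ) → bsum C τ = 0) → C = 0) := by
    intro γ hγα hγt C hCs hCsupp hCt
    apply hV C hCs
    · intro i j hij
      obtain ⟨⟨h1, h2⟩, h3⟩ := hCsupp i j hij
      exact ⟨⟨hγα h1, hγα h2⟩, h3⟩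
    · intro τ hτα hτt
      rw [bsum_support (fun i j hij => (hCsupp i j hij).1) τ]
      exact hCt (τ ∩ γ) Finset.inter_subset_right
        (tight_union_inter hnn hsub hτα hγα hτt hγt).2
  -- helper : apply IH to a proper tight subset
  have hIH : ∀ γ : Finset (Fin m), γ ⊆ α → γ ≠ α → bsum A γ = (γ.card : ℝ) →
      (∀ i ∈ γ, ∑ j ∈ γ, A i j = 1) ∨
        ∃ σ ⊆ γ, σ.card = γ.card - 1 ∧ bsum A σ = (γ.card : ℝ) - 1 := by
    intro γ hγα hγne hγt
    have hlt : γ.card < n := by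
      rw [← hcard]
      exact Finset.card_lt_card (Finset.ssubset_iff_subset_ne.mpr ⟨hγα, hγne⟩)
    exact IH γ.card hlt γ A rfl hsymm hnn (fun τ hτ => hsub τ (hτ.trans hγα)) hγt
      (hgood γ hγα hγt)
  -- helper : the "found a tight set of size n-1" contradiction
  have hcontra : ∀ (τ : Finset (Fin m)) (x : Fin m), x ∈ α → τ ⊆ α → x ∉ τ →
      (∀ a ∈ α, a ≠ x → a ∈ τ) → bsum A τ = (τ.card : ℝ) → False := by
    intro τ x hxα hτα hxτ hτfull hτt
    apply hR
    have hτeq : τ = α.erase x := by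
      ext a
      simp only [Finset.mem_erase]
      constructor
      · intro ha; exact ⟨fun he => hxτ (he ▸ ha), hτα ha⟩
      · intro ⟨h1, h2⟩; exact hτfull a h2 h1
    have hc : τ.card = n - 1 := by
      rw [hτeq, Finset.card_erase_of_mem hxα, hcard]
    have hn1 : 1 ≤ n := by rw [← hcard]; exact Finset.card_pos.mpr ⟨x, hxα⟩
    refine ⟨τ, hτα, hc, ?_⟩
    rw [hτt, hc]
    push_cast [Nat.cast_sub hn1]
    ring
  intro N
  induction N with
  | zero =>
    intro γ δ hγα hγne hγt hδα hδne hδt hun hcards i hi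
    exfalso
    have h1 : γ.card = 0 := by omega
    have h2 : δ.card = 0 := by omega
    rw [Finset.card_eq_zero] at h1 h2
    rw [← hun, h1, h2] at hi
    simp at hi
  | succ N IHN =>
    intro γ δ hγα hγne hγt hδα hδne hδt hun hcards i hi
    -- γ and δ are nonempty
    have hγpos : 0 < γ.card := by
      rcases Nat.eq_zero_or_pos γ.card with h | h
      · exfalso; rw [Finset.card_eq_zero] at h; rw [h, Finset.empty_union] at hun
        exact hδne hun
      · exact h
    have hδpos : 0 < δ.card := by
      rcases Nat.eq_zero_or_pos δ.card with h | h
      · exfalso; rw [Finset.card_eq_zero] at h; rw [h, Finset.union_empty] at hun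
        exact hγne hun
      · exact h
    rcases hIH γ hγα hγne hγt with hγs | ⟨σ, hσγ, hσcard, hσsum⟩
    · -- γ is stochastic; look at δ
      rcases hIH δ hδα hδne hδt with hδs | ⟨σ, hσδ, hσcard, hσsum⟩
      · -- both stochastic: finish
        have hge : ∀ a ∈ α, (1:ℝ) ≤ ∑ j ∈ α, A a j := by
          intro a ha
          rw [← hun] at ha
          rcases Finset.mem_union.mp ha with h | h
          · rw [← hγs a h]
            exact Finset.sum_le_sum_of_subset_of_nonneg hγα (fun j _ _ => hnn a j)
          · rw [← hδs a h]
            exact Finset.sum_le_sum_of_subset_of_nonneg hδα (fun j _ _ => hnn a j)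
        have hsum : ∑ a ∈ α, (1:ℝ) = ∑ a ∈ α, ∑ j ∈ α, A a j := by
          rw [← bsum_eq, hα]; simp
        exact ((Finset.sum_eq_sum_iff_of_le hge).mp hsum i hi).symm
      · -- δ yields a tight subset σ of size |δ|-1
        have hσt : bsum A σ = (σ.card : ℝ) := by
          rw [hσsum, hσcard]
          push_cast [Nat.cast_sub hδpos]
          ring
        have hone : (δ \ σ).card = 1 := by
          rw [Finset.card_sdiff_of_subset hσδ, hσcard]; omega
        obtain ⟨x, hx⟩ := Finset.card_eq_one.mp hone
        have hxδ : x ∈ δ := by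
          have : x ∈ δ \ σ := hx ▸ Finset.mem_singleton_self x
          exact (Finset.mem_sdiff.mp this).1
        have hxσ : x ∉ σ := by
          have : x ∈ δ \ σ := hx ▸ Finset.mem_singleton_self x
          exact (Finset.mem_sdiff.mp this).2
        have hδsub : ∀ a ∈ δ, a ≠ x → a ∈ σ := by
          intro a ha hax
          by_contra hc
          have : a ∈ δ \ σ := Finset.mem_sdiff.mpr ⟨ha, hc⟩
          rw [hx] at this
          exact hax (Finset.mem_singleton.mp this)
        by_cases hxγ : x ∈ γ
        · -- recurse with (γ, σ)
          have hσα : σ ⊆ α := hσδ.trans hδα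
          have hσne : σ ≠ α := by
            intro he
            exact hδne (Finset.Subset.antisymm hδα (he ▸ hσδ))
          have hun' : γ ∪ σ = α := by
            apply Finset.Subset.antisymm (Finset.union_subset hγα hσα)
            intro a ha
            rw [← hun] at ha
            rcases Finset.mem_union.mp ha with h | h
            · exact Finset.mem_union_left _ h
            · by_cases hax : a = x
              · exact Finset.mem_union_left _ (hax ▸ hxγ)
              · exact Finset.mem_union_right _ (hδsub a h hax)
          exact IHN γ σ hγα hγne hγt hσα hσne hσt hun' (by omega) i hi
        · -- contradiction: γ ∪ σ is a tight set of size n-1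
          exfalso
          have hσα : σ ⊆ α := hσδ.trans hδα
          have ht := (tight_union_inter hnn hsub hγα hσα hγt hσt).1
          apply hcontra (γ ∪ σ) x (hδα hxδ) (Finset.union_subset hγα hσα)
            (by simp [hxγ, hxσ]) ?_ ht
          intro a ha hax
          rw [← hun] at ha
          rcases Finset.mem_union.mp ha with h | h
          · exact Finset.mem_union_left _ h
          · exact Finset.mem_union_right _ (hδsub a h hax)
    · -- γ yields a tight subset σ of size |γ|-1
      have hσt : bsum A σ = (σ.card : ℝ) := by
        rw [hσsum, hσcard]
        push_cast [Nat.cast_sub hγpos]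
        ring
      have hone : (γ \ σ).card = 1 := by
        rw [Finset.card_sdiff_of_subset hσγ, hσcard]; omega
      obtain ⟨x, hx⟩ := Finset.card_eq_one.mp hone
      have hxγ : x ∈ γ := by
        have : x ∈ γ \ σ := hx ▸ Finset.mem_singleton_self x
        exact (Finset.mem_sdiff.mp this).1
      have hxσ : x ∉ σ := by
        have : x ∈ γ \ σ := hx ▸ Finset.mem_singleton_self x
        exact (Finset.mem_sdiff.mp this).2
      have hγsub : ∀ a ∈ γ, a ≠ x → a ∈ σ := by
        intro a ha hax
        by_contra hc
        have : a ∈ γ \ σ := Finset.mem_sdiff.mpr ⟨ha, hc⟩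
        rw [hx] at this
        exact hax (Finset.mem_singleton.mp this)
      by_cases hxδ : x ∈ δ
      · -- recurse with (σ, δ)
        have hσα : σ ⊆ α := hσγ.trans hγα
        have hσne : σ ≠ α := by
          intro he
          exact hγne (Finset.Subset.antisymm hγα (he ▸ hσγ))
        have hun' : σ ∪ δ = α := by
          apply Finset.Subset.antisymm (Finset.union_subset hσα hδα)
          intro a ha
          rw [← hun] at ha
          rcases Finset.mem_union.mp ha with h | h
          · by_cases hax : a = x
            · exact Finset.mem_union_right _ (hax ▸ hxδ)
            · exact Finset.mem_union_left _ (hγsub a h hax)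
          · exact Finset.mem_union_right _ h
        exact IHN σ δ hσα hσne hσt hδα hδne hδt hun' (by omega) i hi
      · -- contradiction: σ ∪ δ is a tight set of size n-1
        exfalso
        have hσα : σ ⊆ α := hσγ.trans hγα
        have ht := (tight_union_inter hnn hsub hσα hδα hσt hδt).1
        apply hcontra (σ ∪ δ) x (hγα hxγ) (Finset.union_subset hσα hδα)
          (by simp [hxσ, hxδ]) ?_ ht
        intro a ha hax
        rw [← hun] at ha
        rcases Finset.mem_union.mp ha with h | h
        · exact Finset.mem_union_left _ (hγsub a h hax)
        · exact Finset.mem_union_right _ h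

lemma main (n : ℕ) : ∀ (α : Finset (Fin m)) (A : Matrix (Fin m) (Fin m) ℝ),
    α.card = n → A.IsSymm → (∀ i j, 0 ≤ A i j) →
    (∀ τ ⊆ α, bsum A τ ≤ (τ.card : ℝ)) → bsum A α = (α.card : ℝ) →
    (∀ C : Matrix (Fin m) (Fin m) ℝ, C.IsSymm →
      (∀ i j, C i j ≠ 0 → (i ∈ α ∧ j ∈ α) ∧ 0 < A i j) →
      (∀ τ ⊆ α, bsum A τ = (τ.card : ℝ) → bsum C τ = 0) → C = 0) →
    (∀ i ∈ α, ∑ j ∈ α, A i j = 1) ∨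
      ∃ δ ⊆ α, δ.card = α.card - 1 ∧ bsum A δ = (α.card : ℝ) - 1 := by
  induction n using Nat.strong_induction_on with
  | _ n IH =>
  intro α A hcard hsymm hnn hsub hα hV
  classical
  have hsymm' : ∀ i j, A j i = A i j := by
    intro i j
    have := congrFun (congrFun hsymm j) i
    rw [Matrix.transpose_apply] at this
    exact this.symm
  rcases Nat.eq_zero_or_pos n with hn0 | hn1
  · left
    intro i hi
    rw [hn0] at hcard
    rw [Finset.card_eq_zero.mp hcard] at hi
    simp at hi
  by_cases hR : ∃ δ ⊆ α, δ.card = n - 1 ∧ bsum A δ = ((n : ℝ) - 1)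
  · right
    obtain ⟨δ, h1, h2, h3⟩ := hR
    exact ⟨δ, h1, by rw [hcard]; exact h2, by rw [hcard]; exact h3⟩
  have hbsum_empty : bsum A (∅ : Finset (Fin m)) = 0 := by simp [bsum]
  have hn2 : 2 ≤ n := by
    by_contra hc
    have hn1' : n = 1 := by omega
    apply hR
    exact ⟨∅, Finset.empty_subset _, by rw [Finset.card_empty]; omega, by rw [hbsum_empty, hn1']; norm_num⟩
  have hαne : α ≠ ∅ := by
    intro he
    rw [he, Finset.card_empty] at hcard
    omega
  by_cases hB1 : ∃ x ∈ α, ∀ τ ⊆ α, τ ≠ α → bsum A τ = (τ.card : ℝ) → x ∉ τ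
  · -- Case B1: some x belongs to no proper tight set
    obtain ⟨x, hxα, hxprop⟩ := hB1
    set F : Finset (Finset (Fin m)) :=
      α.powerset.filter (fun τ => τ ≠ α ∧ bsum A τ = (τ.card : ℝ)) with hF
    set β : Finset (Fin m) := F.sup id with hβ
    have hmemF : ∀ τ ∈ F, τ ⊆ α ∧ τ ≠ α ∧ bsum A τ = (τ.card : ℝ) := by
      intro τ hτ
      rw [hF, Finset.mem_filter, Finset.mem_powerset] at hτ
      exact ⟨hτ.1, hτ.2.1, hτ.2.2⟩
    have hβsub : β ⊆ α := by
      rw [hβ]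
      show F.sup id ≤ α
      exact Finset.sup_le fun τ hτ => (hmemF τ hτ).1
    have hβgood : β ⊆ α ∧ bsum A β = (β.card : ℝ) := by
      rw [hβ]
      refine Finset.sup_induction (p := fun b => b ⊆ α ∧ bsum A b = (b.card : ℝ))
        ⟨Finset.empty_subset _, by simp [hbsum_empty]⟩ ?_ ?_
      · intro σ hσ τ hτ
        exact ⟨Finset.union_subset hσ.1 hτ.1,
          (tight_union_inter hnn hsub hσ.1 hτ.1 hσ.2 hτ.2).1⟩
      · intro τ hτ
        exact ⟨(hmemF τ hτ).1, (hmemF τ hτ).2.2⟩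
    have hβtight : bsum A β = (β.card : ℝ) := hβgood.2
    have hsubβ : ∀ τ ∈ F, τ ⊆ β := fun τ hτ => Finset.le_sup (f := id) hτ
    have hxβ : x ∉ β := by
      intro hx
      rw [hβ, Finset.mem_sup] at hx
      obtain ⟨τ, hτF, hxτ⟩ := hx
      obtain ⟨h1, h2, h3⟩ := hmemF τ hτF
      exact hxprop τ h1 h2 h3 hxτ
    have hβne : β ≠ α := fun he => hxβ (he ▸ hxα)
    have hβcard : β.card ≤ n - 2 := by
      have hlt : β.card < n := by
        rw [← hcard]
        exact Finset.card_lt_card (Finset.ssubset_iff_subset_ne.mpr ⟨hβsub, hβne⟩)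
      have hne : β.card ≠ n - 1 := by
        intro he
        apply hR
        refine ⟨β, hβsub, he, ?_⟩
        rw [hβtight, he]
        push_cast [Nat.cast_sub hn1]
        ring
      omega
    -- every proper tight set is contained in β
    have htightβ : ∀ τ ⊆ α, τ ≠ α → bsum A τ = (τ.card : ℝ) → τ ⊆ β := by
      intro τ h1 h2 h3
      apply hsubβ
      rw [hF, Finset.mem_filter, Finset.mem_powerset]
      exact ⟨h1, h2, h3⟩
    -- the sum outside β×β is n - |β| ≥ 2
    have hprodsub : β ×ˢ β ⊆ α ×ˢ α := Finset.product_subset_product hβsub hβsub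
    have houtsum : ∑ p ∈ (α ×ˢ α) \ (β ×ˢ β), A p.1 p.2 = (n : ℝ) - (β.card : ℝ) := by
      have := Finset.sum_sdiff (f := fun p : Fin m × Fin m => A p.1 p.2) hprodsub
      have h1 : bsum A α = (n : ℝ) := by rw [hα, hcard]
      rw [bsum] at h1 hβtight
      linarith [this, h1, hβtight]
    have houtsum2 : (2 : ℝ) ≤ (n : ℝ) - (β.card : ℝ) := by
      have h1 : (β.card : ℝ) ≤ (n : ℝ) - 2 := by
        have : (β.card : ℕ) + 2 ≤ n := by omega
        push_cast [← Nat.cast_le (α := ℝ)] at this ⊢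
        exact_mod_cast by linarith [this]
      linarith
    -- there is a positive entry outside β×β
    have hpos : ∃ i j, (i ∈ α ∧ j ∈ α ∧ ¬(i ∈ β ∧ j ∈ β)) ∧ 0 < A i j := by
      by_contra hc
      have hz : ∀ p ∈ (α ×ˢ α) \ (β ×ˢ β), A p.1 p.2 = 0 := by
        intro p hp
        rw [Finset.mem_sdiff, Finset.mem_product] at hp
        have h1 : ¬(p.1 ∈ β ∧ p.2 ∈ β) := by
          intro h
          exact hp.2 (Finset.mem_product.mpr h)
        by_contra hne
        exact hc ⟨p.1, p.2, ⟨hp.1.1, hp.1.2, h1⟩,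
          lt_of_le_of_ne (hnn p.1 p.2) (Ne.symm hne)⟩
      rw [Finset.sum_eq_zero hz] at houtsum
      linarith
    obtain ⟨i, j, ⟨hiα, hjα, hijβ⟩, hijpos⟩ := hpos
    by_cases htwo : ∃ k l, (k ∈ α ∧ l ∈ α ∧ ¬(k ∈ β ∧ l ∈ β)) ∧ 0 < A k l ∧
        ¬((k = i ∧ l = j) ∨ (k = j ∧ l = i))
    · -- two distinct classes outside β×β : contradiction with rigidity
      exfalso
      obtain ⟨k, l, ⟨hkα, hlα, hklβ⟩, hklpos, hkl⟩ := htwo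
      set s1 : ℝ := if i = j then 1 else 2 with hs1
      set s2 : ℝ := if k = l then 1 else 2 with hs2
      have hs1pos : 0 < s1 := by rw [hs1]; split_ifs <;> norm_num
      have hs2pos : 0 < s2 := by rw [hs2]; split_ifs <;> norm_num
      set C : Matrix (Fin m) (Fin m) ℝ := s2 • classMat i j - s1 • classMat k l with hC
      have hCsymm : C.IsSymm := by
        rw [Matrix.IsSymm, hC, Matrix.transpose_sub, Matrix.transpose_smul,
          Matrix.transpose_smul, classMat_symm, classMat_symm]
      have hCsupp : ∀ a b, C a b ≠ 0 → (a ∈ α ∧ b ∈ α) ∧ 0 < A a b := by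
        intro a b hab
        have h1 : classMat i j a b ≠ 0 ∨ classMat k l a b ≠ 0 := by
          by_contra hcc
          push_neg at hcc
          apply hab
          rw [hC]
          simp [Matrix.sub_apply, Matrix.smul_apply, hcc.1, hcc.2]
        rcases h1 with h | h
        · rcases classMat_ne h with ⟨h1, h2⟩ | ⟨h1, h2⟩
          · rw [h1, h2]
            exact ⟨⟨hiα, hjα⟩, hijpos⟩
          · rw [h1, h2]
            refine ⟨⟨hjα, hiα⟩, ?_⟩
            rw [hsymm' i j]
            exact hijpos
        · rcases classMat_ne h with ⟨h1, h2⟩ | ⟨h1, h2⟩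
          · rw [h1, h2]
            exact ⟨⟨hkα, hlα⟩, hklpos⟩
          · rw [h1, h2]
            refine ⟨⟨hlα, hkα⟩, ?_⟩
            rw [hsymm' k l]
            exact hklpos
      have hCtight : ∀ τ ⊆ α, bsum A τ = (τ.card : ℝ) → bsum C τ = 0 := by
        intro τ hτα hτt
        have hCb : bsum C τ = s2 * bsum (classMat i j) τ - s1 * bsum (classMat k l) τ := by
          rw [hC, bsum_sub, bsum_smul, bsum_smul]
        by_cases hτeq : τ = α
        · subst hτeq
          rw [hCb, bsum_classMat hiα hjα, bsum_classMat hkα hlα, ← hs1, ← hs2]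
          ring
        · have hτβ : τ ⊆ β := htightβ τ hτα hτeq hτt
          rw [hCb, bsum_classMat_zero (fun hm => hijβ ⟨hτβ hm.1, hτβ hm.2⟩),
            bsum_classMat_zero (fun hm => hklβ ⟨hτβ hm.1, hτβ hm.2⟩)]
          ring
      have hC0 := hV C hCsymm hCsupp hCtight
      have hCij : C i j = s2 := by
        rw [hC]
        have hz : classMat k l i j = 0 := by
          by_contra hne
          rcases classMat_ne hne with ⟨h1, h2⟩ | ⟨h1, h2⟩
          · exact hkl (Or.inl ⟨h1.symm, h2.symm⟩)
          · exact hkl (Or.inr ⟨h2.symm, h1.symm⟩)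
        simp [Matrix.sub_apply, Matrix.smul_apply, classMat_self, hz]
      rw [hC0] at hCij
      simp at hCij
      linarith
    · -- only one class outside β×β
      have hzero : ∀ k l, k ∈ α → l ∈ α → ¬(k ∈ β ∧ l ∈ β) →
          ¬((k = i ∧ l = j) ∨ (k = j ∧ l = i)) → A k l = 0 := by
        intro k l h1 h2 h3 h4
        by_contra hne
        exact htwo ⟨k, l, ⟨h1, h2, h3⟩, lt_of_le_of_ne (hnn k l) (Ne.symm hne), h4⟩
      by_cases hij : i = j
      · -- a diagonal class : A i i = n - |β| ≥ 2 > 1, contradiction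
        exfalso
        subst hij
        have hmem : ((i, i) : Fin m × Fin m) ∈ (α ×ˢ α) \ (β ×ˢ β) := by
          rw [Finset.mem_sdiff, Finset.mem_product, Finset.mem_product]
          exact ⟨⟨hiα, hiα⟩, fun h => hijβ ⟨h.1, h.2⟩⟩
        have hsingle : ∑ p ∈ (α ×ˢ α) \ (β ×ˢ β), A p.1 p.2 = A i i := by
          apply Finset.sum_eq_single_of_mem _ hmem
          intro p hp hpne
          rw [Finset.mem_sdiff, Finset.mem_product] at hp
          apply hzero p.1 p.2 hp.1.1 hp.1.2 (fun h => hp.2 (Finset.mem_product.mpr h))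
          intro hc
          apply hpne
          rcases hc with ⟨h1, h2⟩ | ⟨h1, h2⟩ <;> exact Prod.ext h1 h2
        have hAii : A i i = (n : ℝ) - (β.card : ℝ) := by rw [← hsingle, houtsum]
        have hcon := hsub {i} (Finset.singleton_subset_iff.mpr hiα)
        have hbs : bsum A {i} = A i i := by simp [bsum]
        rw [hbs, Finset.card_singleton, hAii] at hcon
        push_cast at hcon
        linarith [houtsum2]
      · -- an off-diagonal class
        have hmem1 : ((i, j) : Fin m × Fin m) ∈ (α ×ˢ α) \ (β ×ˢ β) := by
          rw [Finset.mem_sdiff, Finset.mem_product, Finset.mem_product]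
          exact ⟨⟨hiα, hjα⟩, fun h => hijβ ⟨h.1, h.2⟩⟩
        have hmem2 : ((j, i) : Fin m × Fin m) ∈ (α ×ˢ α) \ (β ×ˢ β) := by
          rw [Finset.mem_sdiff, Finset.mem_product, Finset.mem_product]
          exact ⟨⟨hjα, hiα⟩, fun h => hijβ ⟨h.2, h.1⟩⟩
        have hijne : ((i, j) : Fin m × Fin m) ≠ (j, i) := by
          intro hc
          exact hij (congrArg Prod.fst hc)
        have hsplit : ∀ p ∈ (α ×ˢ α) \ (β ×ˢ β), A p.1 p.2 =
            (if p = (i, j) then A i j else 0) + (if p = (j, i) then A j i else 0) := by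
          intro p hp
          rw [Finset.mem_sdiff, Finset.mem_product] at hp
          rcases eq_or_ne p (i, j) with h1 | h1
          · subst h1
            simp [hijne]
          · rcases eq_or_ne p (j, i) with h2 | h2
            · subst h2
              simp [h1]
            · rw [if_neg h1, if_neg h2, add_zero]
              apply hzero p.1 p.2 hp.1.1 hp.1.2 (fun h => hp.2 (Finset.mem_product.mpr h))
              intro hc
              rcases hc with ⟨ha, hb⟩ | ⟨ha, hb⟩
              · exact h1 (Prod.ext ha hb)
              · exact h2 (Prod.ext ha hb)
        have hsum2 : ∑ p ∈ (α ×ˢ α) \ (β ×ˢ β), A p.1 p.2 = A i j + A j i := by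
          rw [Finset.sum_congr rfl hsplit, Finset.sum_add_distrib,
            Finset.sum_ite_eq' _ ((i, j) : Fin m × Fin m),
            Finset.sum_ite_eq' _ ((j, i) : Fin m × Fin m), if_pos hmem1, if_pos hmem2]
        have hAij2 : A i j + A j i = (n : ℝ) - (β.card : ℝ) := by rw [← hsum2, houtsum]
        set α' : Finset (Fin m) := insert i (insert j β) with hα'
        have hβα' : β ⊆ α' := (Finset.subset_insert j β).trans (Finset.subset_insert i _)
        have hα'sub : α' ⊆ α := by
          rw [hα']
          exact Finset.insert_subset hiα (Finset.insert_subset hjα hβsub)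
        have hiα' : i ∈ α' := Finset.mem_insert_self i _
        have hjα' : j ∈ α' := Finset.mem_insert_of_mem (Finset.mem_insert_self j β)
        have hmem1' : ((i, j) : Fin m × Fin m) ∈ (α' ×ˢ α') \ (β ×ˢ β) := by
          rw [Finset.mem_sdiff, Finset.mem_product, Finset.mem_product]
          exact ⟨⟨hiα', hjα'⟩, fun h => hijβ ⟨h.1, h.2⟩⟩
        have hmem2' : ((j, i) : Fin m × Fin m) ∈ (α' ×ˢ α') \ (β ×ˢ β) := by
          rw [Finset.mem_sdiff, Finset.mem_product, Finset.mem_product]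
          exact ⟨⟨hjα', hiα'⟩, fun h => hijβ ⟨h.2, h.1⟩⟩
        have hα'tight : bsum A α' = (n : ℝ) := by
          have hps : β ×ˢ β ⊆ α' ×ˢ α' := Finset.product_subset_product hβα' hβα'
          have hdec := Finset.sum_sdiff (f := fun p : Fin m × Fin m => A p.1 p.2) hps
          have hsd : ∑ p ∈ (α' ×ˢ α') \ (β ×ˢ β), A p.1 p.2 = A i j + A j i := by
            have hsplit' : ∀ p ∈ (α' ×ˢ α') \ (β ×ˢ β), A p.1 p.2 =
                (if p = (i, j) then A i j else 0) + (if p = (j, i) then A j i else 0) := by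
              intro p hp
              apply hsplit
              rw [Finset.mem_sdiff] at hp ⊢
              exact ⟨Finset.product_subset_product hα'sub hα'sub hp.1, hp.2⟩
            rw [Finset.sum_congr rfl hsplit', Finset.sum_add_distrib,
              Finset.sum_ite_eq' _ ((i, j) : Fin m × Fin m),
              Finset.sum_ite_eq' _ ((j, i) : Fin m × Fin m), if_pos hmem1', if_pos hmem2']
          have hβb : bsum A β = (β.card : ℝ) := hβtight
          rw [bsum] at hβb ⊢
          rw [← hdec, hsd, hβb, hAij2]
          ring
        have hcardle : α'.card ≤ n := by
          rw [← hcard]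
          exact Finset.card_le_card hα'sub
        have hcardge : (n : ℝ) ≤ (α'.card : ℝ) := by
          have := hsub α' hα'sub
          rw [hα'tight] at this
          exact this
        have hcardeq : α'.card = n := by
          have : n ≤ α'.card := by exact_mod_cast hcardge
          omega
        have hα'eq : α' = α := Finset.eq_of_subset_of_card_le hα'sub (by omega)
        have hcard2 : n ≤ β.card + 2 := by
          calc n = α'.card := hcardeq.symm
          _ ≤ (insert j β).card + 1 := Finset.card_insert_le _ _
          _ ≤ β.card + 2 := by linarith [Finset.card_insert_le j β]
        have hβn2 : β.card = n - 2 := by omega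
        have hjβ : j ∉ β := by
          intro hjb
          have : α' = insert i β := by rw [hα', Finset.insert_eq_self.mpr hjb]
          have h1 : α'.card ≤ β.card + 1 := this ▸ Finset.card_insert_le i β
          omega
        have hiβ : i ∉ β := by
          intro hib
          have h1 : α' = insert j β := by
            rw [hα', Finset.insert_eq_self.mpr (Finset.mem_insert_of_mem hib)]
          have h2 : α'.card ≤ β.card + 1 := h1 ▸ Finset.card_insert_le j β
          omega
        have hAii : A i i = 0 := by
          apply hzero i i hiα hiα (fun h => hiβ h.1)
          intro hc
          exact hc.elim (fun h => hij h.2) (fun h => hij h.1)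
        have hAjj : A j j = 0 := by
          apply hzero j j hjα hjα (fun h => hjβ h.1)
          intro hc
          exact hc.elim (fun h => hij h.1.symm) (fun h => hij h.2.symm)
        have hβcast : (β.card : ℝ) = (n : ℝ) - 2 := by
          rw [hβn2]
          push_cast [Nat.cast_sub hn2]
          ring
        have hAij1 : A i j = 1 := by
          have hs := hsymm' i j
          rw [hβcast] at hAij2
          linarith
        have hAji1 : A j i = 1 := by rw [hsymm' i j, hAij1]
        have hpairtight : bsum A {i, j} = 2 := by
          rw [bsum_eq]
          rw [Finset.sum_pair hij]
          rw [Finset.sum_pair hij, Finset.sum_pair hij]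
          rw [hAii, hAjj, hAij1, hAji1]
          ring
        have hpaircard : ({i, j} : Finset (Fin m)).card = 2 := Finset.card_pair hij
        have hpairsub : ({i, j} : Finset (Fin m)) ⊆ α :=
          Finset.insert_subset hiα (Finset.singleton_subset_iff.mpr hjα)
        by_cases hpair : ({i, j} : Finset (Fin m)) = α
        · -- α = {i,j} and A restricted is the 2×2 exchange matrix: stochastic
          left
          intro a ha
          rw [← hpair] at ha ⊢
          rcases Finset.mem_insert.mp ha with rfl | ha'
          · rw [Finset.sum_pair hij, hAii, hAij1]
            ring
          · rw [Finset.mem_singleton.mp ha']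
            rw [Finset.sum_pair hij, hAjj, hAji1]
            ring
        · -- otherwise {i,j} is a proper tight set avoiding x, but x ∈ {i,j}
          exfalso
          have hxnotpair : x ∉ ({i, j} : Finset (Fin m)) := by
            apply hxprop {i, j} hpairsub hpair
            rw [hpairtight, hpaircard]
            norm_num
          have hxα' : x ∈ α' := hα'eq ▸ hxα
          rw [hα'] at hxα'
          rcases Finset.mem_insert.mp hxα' with rfl | hx2
          · exact hxnotpair (Finset.mem_insert_self _ _)
          rcases Finset.mem_insert.mp hx2 with rfl | hx3
          · exact hxnotpair (Finset.mem_insert_of_mem (Finset.mem_singleton_self _))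
          · exact hxβ hx3
  · -- Case B2: every element of α lies in some proper tight set
    push_neg at hB1
    set F : Finset (Finset (Fin m)) :=
      α.powerset.filter (fun τ => τ ≠ α ∧ bsum A τ = (τ.card : ℝ)) with hF
    have hFne : F.Nonempty := by
      refine ⟨∅, ?_⟩
      rw [hF, Finset.mem_filter, Finset.mem_powerset]
      exact ⟨Finset.empty_subset _, fun he => hαne he.symm, by simp [hbsum_empty]⟩
    obtain ⟨γ, hγF, hγmax⟩ := Finset.exists_max_image F Finset.card hFne
    have hγmem := hγF
    rw [hF, Finset.mem_filter, Finset.mem_powerset] at hγmem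
    have hγα := hγmem.1
    have hγne := hγmem.2.1
    have hγt := hγmem.2.2
    obtain ⟨x, hxα, hxγ⟩ :=
      Finset.exists_of_ssubset (Finset.ssubset_iff_subset_ne.mpr ⟨hγα, hγne⟩)
    obtain ⟨δ, hδα, hδne, hδt, hxδ⟩ := hB1 x hxα
    have hunion_t := (tight_union_inter hnn hsub hγα hδα hγt hδt).1
    have huneq : γ ∪ δ = α := by
      by_contra hc
      have hmem : γ ∪ δ ∈ F := by
        rw [hF, Finset.mem_filter, Finset.mem_powerset]
        exact ⟨Finset.union_subset hγα hδα, hc, hunion_t⟩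
      have hlt : γ.card < (γ ∪ δ).card := by
        apply Finset.card_lt_card
        exact (Finset.ssubset_iff_of_subset Finset.subset_union_left).mpr
          ⟨x, Finset.mem_union_right _ hxδ, hxγ⟩
      exact absurd (hγmax _ hmem) (not_le.mpr hlt)
    left
    exact fun i hi => combine n α A IH hcard hsymm hnn hsub hα hV hR
      (γ.card + δ.card) γ δ hγα hγne hγt hδα hδne hδt huneq le_rfl i hi

lemma extreme_rigid {A : Matrix (Fin m) (Fin m) ℝ} (h : IsExtremePt (U1 m) A)
    (C : Matrix (Fin m) (Fin m) ℝ) (hCs : C.IsSymm)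
    (hCsupp : ∀ i j, C i j ≠ 0 → 0 < A i j)
    (hCt : ∀ τ : Finset (Fin m), bsum A τ = (τ.card : ℝ) → bsum C τ = 0) : C = 0 := by
  classical
  by_contra hC
  obtain ⟨hAs, hAnn, hAb, hAtot⟩ := h.1
  have hAb' : ∀ τ : Finset (Fin m), bsum A τ ≤ (τ.card : ℝ) := by
    intro τ; rw [bsum_eq]; exact hAb τ
  -- choose t
  set S1 : Finset (Fin m × Fin m) := Finset.univ.filter (fun p => C p.1 p.2 ≠ 0) with hS1
  set S2 : Finset (Finset (Fin m)) := Finset.univ.filter (fun τ => bsum C τ ≠ 0) with hS2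
  set T : Finset ℝ :=
    {1} ∪ S1.image (fun p => A p.1 p.2 / |C p.1 p.2|)
        ∪ S2.image (fun τ => ((τ.card : ℝ) - bsum A τ) / |bsum C τ|) with hT
  have hTne : T.Nonempty := ⟨1, by simp [hT]⟩
  set t : ℝ := T.min' hTne with ht
  have hTpos : ∀ x ∈ T, 0 < x := by
    intro x hx
    simp only [hT, Finset.mem_union, Finset.mem_singleton, Finset.mem_image] at hx
    rcases hx with (rfl | ⟨p, hp, rfl⟩) | ⟨τ, hτ, rfl⟩
    · norm_num
    · simp only [hS1, Finset.mem_filter] at hp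
      exact div_pos (hCsupp p.1 p.2 hp.2) (abs_pos.mpr hp.2)
    · simp only [hS2, Finset.mem_filter] at hτ
      have hne : bsum A τ ≠ (τ.card : ℝ) := fun he => hτ.2 (hCt τ he)
      exact div_pos (by cases lt_or_eq_of_le (hAb' τ) with
        | inl h => linarith
        | inr h => exact absurd h hne) (abs_pos.mpr hτ.2)
  have htpos : 0 < t := hTpos _ (Finset.min'_mem _ _)
  have hbound1 : ∀ i j, C i j ≠ 0 → t * |C i j| ≤ A i j := by
    intro i j hij
    have hmem : A i j / |C i j| ∈ T := by
      simp only [hT, Finset.mem_union, Finset.mem_image]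
      exact Or.inl (Or.inr ⟨(i, j), by simp [hS1, hij], rfl⟩)
    have := Finset.min'_le T _ hmem
    rw [le_div_iff₀ (abs_pos.mpr hij)] at this
    linarith
  have hbound2 : ∀ τ : Finset (Fin m), bsum C τ ≠ 0 →
      t * |bsum C τ| ≤ (τ.card : ℝ) - bsum A τ := by
    intro τ hτ
    have hmem : ((τ.card : ℝ) - bsum A τ) / |bsum C τ| ∈ T := by
      simp only [hT, Finset.mem_union, Finset.mem_image]
      exact Or.inr ⟨τ, by simp [hS2, hτ], rfl⟩
    have := Finset.min'_le T _ hmem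
    rw [le_div_iff₀ (abs_pos.mpr hτ)] at this
    linarith
  -- membership of the two perturbations
  have hmem : ∀ s : ℝ, |s| ≤ t → A + s • C ∈ U1 m := by
    intro s hs
    refine ⟨?_, ?_, ?_, ?_⟩
    · rw [Matrix.IsSymm, Matrix.transpose_add, Matrix.transpose_smul, hAs, hCs]
    · intro i j
      by_cases hij : C i j = 0
      · simp [hij, hAnn i j]
      · have h1 := hbound1 i j hij
        have h2 : |s * C i j| ≤ t * |C i j| := by
          rw [abs_mul]
          exact mul_le_mul_of_nonneg_right hs (abs_nonneg _)
        have := abs_le.mp (le_trans h2 h1)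
        simp only [Matrix.add_apply, Matrix.smul_apply, smul_eq_mul]
        linarith [this.1]
    · intro τ
      rw [← bsum_eq, bsum_add, bsum_smul]
      by_cases hτ : bsum C τ = 0
      · rw [hτ]; simpa using hAb' τ
      · have h1 := hbound2 τ hτ
        have h2 : |s * bsum C τ| ≤ t * |bsum C τ| := by
          rw [abs_mul]; exact mul_le_mul_of_nonneg_right hs (abs_nonneg _)
        have := abs_le.mp (le_trans h2 h1)
        linarith [this.2]
    · have huniv : bsum A Finset.univ = ((Finset.univ : Finset (Fin m)).card : ℝ) := by
        rw [bsum_eq]; simp [hAtot]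
      have h0 := hCt Finset.univ huniv
      rw [← bsum_eq, bsum_add, bsum_smul, h0, mul_zero, add_zero, bsum_eq, hAtot]
  have hm1 : A + t • C ∈ U1 m := hmem t (by rw [abs_of_pos htpos])
  have hm2 : A + (-t) • C ∈ U1 m := hmem (-t) (by rw [abs_neg, abs_of_pos htpos])
  have heq : A = (1 / 2 : ℝ) • ((A + t • C) + (A + (-t) • C)) := by
    ext i j
    simp only [Matrix.smul_apply, Matrix.add_apply, smul_eq_mul]
    ring
  have := h.2 _ hm1 _ hm2 heq
  apply hC
  ext i j
  have := congrFun (congrFun this i) j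
  simp only [Matrix.add_apply, Matrix.smul_apply, smul_eq_mul, Matrix.zero_apply] at this ⊢
  nlinarith [this]


/-- Every extreme point of `U_1` is either stochastic or has a saturated principal
block of size `m - 1`. -/
theorem extreme_U1_stochastic_or_saturated (m : ℕ) (A : Matrix (Fin m) (Fin m) ℝ)
    (h : IsExtremePt (U1 m) A) :
    IsStochastic m A ∨
      ∃ α : Finset (Fin m), α.card = m - 1 ∧
        ∑ i ∈ α, ∑ j ∈ α, A i j = (m : ℝ) - 1 := by
  obtain ⟨hAs, hAnn, hAb, hAtot⟩ := h.1
  have hsub : ∀ τ ⊆ (Finset.univ : Finset (Fin m)), bsum A τ ≤ (τ.card : ℝ) := by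
    intro τ _
    rw [bsum_eq]
    exact hAb τ
  have huniv : bsum A Finset.univ = ((Finset.univ : Finset (Fin m)).card : ℝ) := by
    rw [bsum_eq]
    simpa using hAtot
  have hV : ∀ C : Matrix (Fin m) (Fin m) ℝ, C.IsSymm →
      (∀ i j, C i j ≠ 0 → (i ∈ (Finset.univ : Finset (Fin m)) ∧ j ∈ Finset.univ) ∧ 0 < A i j) →
      (∀ τ ⊆ (Finset.univ : Finset (Fin m)), bsum A τ = (τ.card : ℝ) → bsum C τ = 0) →
      C = 0 := by
    intro C h1 h2 h3
    exact extreme_rigid h C h1 (fun i j hij => (h2 i j hij).2)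
      (fun τ ht => h3 τ (Finset.subset_univ τ) ht)
  rcases main m Finset.univ A (by simp) hAs hAnn hsub huniv hV with hst | ⟨δ, _, h2, h3⟩
  · left
    exact ⟨hAnn, fun i => by simpa using hst i (Finset.mem_univ i)⟩
  · right
    refine ⟨δ, ?_, ?_⟩
    · simpa using h2
    · rw [← bsum_eq]
      simpa using h3
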